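/- Let d ∈ (0,1), let n be a positive even integer and let m be an integer with 1 ≤ m ≤ n, and assume Q(d) ≠ 0. Then the WENO-RM mapping function satisfies g_RM(0) = 0, g_RM(d) = d, g_RM(1) = 1, and g_RM(ω) = O(ω^{m+1}) as ω → 0 (so g_RM and its derivatives up to order m vanish at 0). -/

import Mathlib

open Polynomial

/-- Let `d ∈ (0,1)`, `n` a positive even integer, `m` an integer with
`1 ≤ m ≤ n`, and assume `Q(d) ≠ 0`.  Then the WENO-RM mapping function
`g_RM(ω) = d + (ω − d)^{n+1}/Q(ω)` satisfies `g_RM(0) = 0`, `g_RM(d) = d`,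
`g_RM(1) = 1`, and `g_RM(ω) = O(ω^{m+1})` as `ω → 0` (so `g_RM` and its
derivatives up to order `m` vanish at `0`). -/
theorem stmt8 (d : ℝ) (hd : d ∈ Set.Ioo (0 : ℝ) 1) (n m : ℕ)
    (hn : 0 < n) (hne : Even n) (hm : 1 ≤ m) (hmn : m ≤ n)
    (a : ℕ → ℝ)
    (ha : ∀ i ≤ m, a i = ((n + 1).choose i : ℝ) * (-d) ^ (n - i))
    (ham : a (m + 1) = (1 - d) ^ n - ∑ i ∈ Finset.range (m + 1), a i)
    (Q : ℝ → ℝ)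
    (hQ : ∀ ω : ℝ, Q ω = ∑ i ∈ Finset.range (m + 2), a i * ω ^ i)
    (hQd : Q d ≠ 0)
    (gRM : ℝ → ℝ)
    (hgRM : ∀ ω : ℝ, gRM ω = d + (ω - d) ^ (n + 1) / Q ω) :
    gRM 0 = 0 ∧ gRM d = d ∧ gRM 1 = 1 ∧
    (gRM =O[nhds 0] fun ω : ℝ => ω ^ (m + 1)) := by
  obtain ⟨hd0, hd1⟩ := hd
  have hdne : d ≠ 0 := ne_of_gt hd0
  have h1d : (1 : ℝ) - d ≠ 0 := by linarith
  -- Q 0 = d ^ n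
  have hQ0 : Q 0 = d ^ n := by
    rw [hQ 0]
    rw [Finset.sum_eq_single 0 (fun i _ hi => by
      simp [zero_pow hi]) (by simp)]
    simp [ha 0 (by omega), hne.neg_pow]
  have hQ0ne : Q 0 ≠ 0 := by rw [hQ0]; exact pow_ne_zero _ hdne
  -- g 0 = 0
  have hg0 : gRM 0 = 0 := by
    rw [hgRM 0, hQ0]
    have : (0 - d) ^ (n + 1) = -(d ^ n * d) := by
      rw [zero_sub, pow_succ, hne.neg_pow]; ring
    rw [this]
    field_simp
    ring
  -- g d = d
  have hgd : gRM d = d := by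
    rw [hgRM d]
    simp
  -- Q 1 = (1-d)^n
  have hQ1 : Q 1 = (1 - d) ^ n := by
    rw [hQ 1]
    simp only [one_pow, mul_one]
    rw [Finset.sum_range_succ, ham]
    ring
  have hg1 : gRM 1 = 1 := by
    rw [hgRM 1, hQ1, pow_succ]
    field_simp
    ring
  refine ⟨hg0, hgd, hg1, ?_⟩
  -- Big-O part
  set P : ℝ → ℝ := fun ω => d * a (m + 1) +
    ∑ j ∈ Finset.range (n + 1 - m), ((n + 1).choose (m + 1 + j) : ℝ) * (-d) ^ (n - m - j) * ω ^ j
    with hP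
  have hkey : ∀ ω : ℝ, d * Q ω + (ω - d) ^ (n + 1) = ω ^ (m + 1) * P ω := by
    intro ω
    have e1 : d * Q ω = (∑ i ∈ Finset.range (m + 1), d * (a i * ω ^ i)) +
        d * (a (m + 1) * ω ^ (m + 1)) := by
      rw [hQ ω, Finset.mul_sum, Finset.sum_range_succ]
    have e2 : (ω - d) ^ (n + 1) =
        (∑ i ∈ Finset.range (m + 1), ω ^ i * (-d) ^ (n + 1 - i) * ((n + 1).choose i : ℝ)) +
        ∑ j ∈ Finset.range (n + 1 - m),
          ω ^ (m + 1 + j) * (-d) ^ (n + 1 - (m + 1 + j)) * ((n + 1).choose (m + 1 + j) : ℝ) := by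
      rw [sub_eq_add_neg, add_pow, show n + 1 + 1 = (m + 1) + (n + 1 - m) by omega,
        Finset.sum_range_add]
    have e3 : (∑ i ∈ Finset.range (m + 1), d * (a i * ω ^ i)) +
        ∑ i ∈ Finset.range (m + 1), ω ^ i * (-d) ^ (n + 1 - i) * ((n + 1).choose i : ℝ) = 0 := by
      rw [← Finset.sum_add_distrib]
      refine Finset.sum_eq_zero fun i hi => ?_
      simp only [Finset.mem_range] at hi
      have him : i ≤ m := by omega
      rw [ha i him, show n + 1 - i = (n - i) + 1 by omega, pow_succ]
      ring
    have e4 : d * (a (m + 1) * ω ^ (m + 1)) +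
        (∑ j ∈ Finset.range (n + 1 - m),
          ω ^ (m + 1 + j) * (-d) ^ (n + 1 - (m + 1 + j)) * ((n + 1).choose (m + 1 + j) : ℝ)) =
        ω ^ (m + 1) * P ω := by
      rw [hP, mul_add, Finset.mul_sum]
      have : ∀ j ∈ Finset.range (n + 1 - m),
          ω ^ (m + 1 + j) * (-d) ^ (n + 1 - (m + 1 + j)) * ((n + 1).choose (m + 1 + j) : ℝ) =
          ω ^ (m + 1) * (((n + 1).choose (m + 1 + j) : ℝ) * (-d) ^ (n - m - j) * ω ^ j) := by
        intro j hj
        rw [show n + 1 - (m + 1 + j) = n - m - j by omega, pow_add]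
        ring
      rw [Finset.sum_congr rfl this]
      ring
    rw [e1, e2]
    linarith [e3, e4]
  -- continuity of Q, P
  have hQfun : Q = fun ω => ∑ i ∈ Finset.range (m + 2), a i * ω ^ i := funext hQ
  have hQcont : Continuous Q := by
    rw [hQfun]; continuity
  have hPcont : Continuous P := by
    rw [hP]
    apply Continuous.add continuous_const
    exact continuous_finset_sum _ fun j _ => by continuity
  have hne0 : ∀ᶠ ω in nhds (0 : ℝ), Q ω ≠ 0 :=
    hQcont.continuousAt.eventually_ne hQ0ne
  have hEq : gRM =ᶠ[nhds (0 : ℝ)] fun ω => ω ^ (m + 1) * (P ω / Q ω) := by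
    filter_upwards [hne0] with ω hω
    rw [hgRM ω, mul_div_assoc', ← hkey ω, add_div, mul_div_cancel_right₀ d hω]
  have h1 : (fun ω => P ω / Q ω) =O[nhds (0 : ℝ)] (fun _ => (1 : ℝ)) := by
    have : Filter.Tendsto (fun ω => P ω / Q ω) (nhds 0) (nhds (P 0 / Q 0)) :=
      (hPcont.continuousAt.div hQcont.continuousAt hQ0ne)
    exact this.isBigO_one ℝ
  have h2 : (fun ω : ℝ => ω ^ (m + 1) * (P ω / Q ω)) =O[nhds 0]
      (fun ω : ℝ => ω ^ (m + 1)) := by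
    have := (Asymptotics.isBigO_refl (fun ω : ℝ => ω ^ (m + 1)) (nhds 0)).mul h1
    simpa using this
  exact hEq.trans_isBigO h2
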